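/- Suppose ∫_A |ρ_a(0)| μ(da) < ∞ and there exist an integrable function ξ : A → ℝ and a probability measure Q ≪ P with ρ_a*(Q) ≤ ξ(a) for μ-a.e. a. Then the integral infimal convolution □_{a∈A} ρ_a μ(da) is finite everywhere on L^∞(P); in fact (□ ρ_a μ(da))(X) ≥ E^Q[X] − ∫_A ξ dμ and (□ ρ_a μ(da))(X) ≤ ‖X‖_∞ + ∫_A |ρ_a(0)| dμ. -/

import Mathlib

open MeasureTheory
open scoped ENNReal NNReal
noncomputable section

variable {Ω A : Type*} [MeasurableSpace Ω] [MeasurableSpace A]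

/-- An allocation `(X_a)_{a ∈ A}` is `𝒜`-measurable if all the pairings
`a ↦ E[X_a Y]`, `Y ∈ L¹(P)`, are measurable. -/
def AllocMeasurable (P : Measure Ω) [IsProbabilityMeasure P]
    (f : A → Lp ℝ ⊤ P) : Prop :=
  ∀ Y : Lp ℝ 1 P, Measurable fun a => ∫ ω, f a ω * Y ω ∂P

/-- An `X`-feasible allocation: a measurable, Gelfand integrable family whose Gelfand
integral is `X` (characterized through all pairings with `L¹(P)`). -/
def IsAllocOf (P : Measure Ω) [IsProbabilityMeasure P] (μ : Measure A)
    (f : A → Lp ℝ ⊤ P) (X : Lp ℝ ⊤ P) : Prop :=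
  AllocMeasurable P f ∧
    ∀ Y : Lp ℝ 1 P, Integrable (fun a => ∫ ω, f a ω * Y ω ∂P) μ ∧
      ∫ a, (∫ ω, f a ω * Y ω ∂P) ∂μ = ∫ ω, X ω * Y ω ∂P

/-- The set of attained total risks `∫_A ρ_a(X_a) μ(da)` over `X`-feasible allocations
with integrable risk; the integral infimal convolution is its infimum. -/
def valSet (P : Measure Ω) [IsProbabilityMeasure P] (μ : Measure A)
    (ρ : A → Lp ℝ ⊤ P → ℝ) (X : Lp ℝ ⊤ P) : Set ℝ :=
  {r : ℝ | ∃ f : A → Lp ℝ ⊤ P, IsAllocOf P μ f X ∧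
    Integrable (fun a => ρ a (f a)) μ ∧ r = ∫ a, ρ a (f a) ∂μ}

/-- In `L^∞`, a.e. `|Z ω| ≤ ‖Z‖`. -/
lemma ae_abs_le_norm' (P : Measure Ω) (Z : Lp ℝ ⊤ P) :
    ∀ᵐ ω ∂P, |Z ω| ≤ ‖Z‖ := by
  have h := MeasureTheory.ae_le_eLpNormEssSup (μ := P) (f := (Z : Ω → ℝ))
  filter_upwards [h] with ω hω
  have hnorm : ‖Z‖ = (eLpNormEssSup (Z : Ω → ℝ) P).toReal := by
    rw [Lp.norm_def, eLpNorm_exponent_top]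
  rw [hnorm]
  have hne : eLpNormEssSup (Z : Ω → ℝ) P ≠ ⊤ := by
    have := Lp.eLpNorm_ne_top Z
    rwa [eLpNorm_exponent_top] at this
  have : ((‖Z ω‖₊ : ℝ≥0∞)).toReal ≤ (eLpNormEssSup (Z : Ω → ℝ) P).toReal :=
    ENNReal.toReal_mono hne (by exact_mod_cast hω)
  simpa [Real.norm_eq_abs] using this

lemma le_const_norm' (P : Measure Ω) [IsProbabilityMeasure P] (Z : Lp ℝ ⊤ P) :
    Z ≤ Lp.const ⊤ P ‖Z‖ := by
  rw [← Lp.coeFn_le]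
  filter_upwards [Lp.coeFn_const (p := (⊤ : ℝ≥0∞)) (μ := P) ‖Z‖, ae_abs_le_norm' P Z]
    with ω h1 h2
  rw [h1]
  exact le_trans (le_abs_self _) h2

lemma neg_const_norm_le' (P : Measure Ω) [IsProbabilityMeasure P] (Z : Lp ℝ ⊤ P) :
    Lp.const ⊤ P (-‖Z‖) ≤ Z := by
  rw [← Lp.coeFn_le]
  filter_upwards [Lp.coeFn_const (p := (⊤ : ℝ≥0∞)) (μ := P) (-‖Z‖), ae_abs_le_norm' P Z]
    with ω h1 h2
  rw [h1]
  have := neg_abs_le (Z ω)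
  simp only [Function.const_apply]
  linarith [abs_le.mp h2]

/-- if `∫ |ρ_a(0)| dμ < ∞` and `ρ_a*(Q) ≤ ξ(a)` a.e. for some integrable
`ξ` and probability measure `Q ≪ P`, then the integral infimal convolution is finite
everywhere, with the bounds `E^Q[X] - ∫ ξ dμ ≤ (□ ρ_a μ(da))(X) ≤ ‖X‖_∞ + ∫ |ρ_a(0)| dμ`. -/
theorem integralInfConv_globally_finite
    (P : Measure Ω) [IsProbabilityMeasure P]
    (μ : Measure A) [IsFiniteMeasure μ] (hμ : μ Set.univ ≠ 0)
    (ρ : A → Lp ℝ ⊤ P → ℝ)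
    (hmono : ∀ a, ∀ X Y : Lp ℝ ⊤ P, X ≤ Y → ρ a X ≤ ρ a Y)
    (hcash : ∀ a, ∀ (X : Lp ℝ ⊤ P) (c : ℝ), ρ a (X + Lp.const ⊤ P c) = ρ a X + c)
    (hfam : ∀ f : A → Lp ℝ ⊤ P, AllocMeasurable P f → Measurable fun a => ρ a (f a))
    (hρ0 : Integrable (fun a => ρ a (0 : Lp ℝ ⊤ P)) μ)
    (ξ : A → ℝ) (hξ : Integrable ξ μ)
    (Q : Measure Ω) [IsProbabilityMeasure Q] (hQ : Q ≪ P)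
    (hconj : ∀ᵐ a ∂μ, ∀ X : Lp ℝ ⊤ P, ∫ ω, X ω ∂Q - ρ a X ≤ ξ a) :
    ∀ X : Lp ℝ ⊤ P,
      (valSet P μ ρ X).Nonempty ∧ BddBelow (valSet P μ ρ X) ∧
      (∫ ω, X ω ∂Q - ∫ a, ξ a ∂μ ≤ sInf (valSet P μ ρ X)) ∧
      sInf (valSet P μ ρ X) ≤ ‖X‖ + ∫ a, |ρ a (0 : Lp ℝ ⊤ P)| ∂μ := by
  intro X
  -- general bound on ρ a
  have hbound : ∀ a (Z : Lp ℝ ⊤ P), ρ a 0 - ‖Z‖ ≤ ρ a Z ∧ ρ a Z ≤ ρ a 0 + ‖Z‖ := by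
    intro a Z
    constructor
    · have h1 : Lp.const ⊤ P (-‖Z‖) ≤ Z := neg_const_norm_le' P Z
      have h2 : ρ a ((0 : Lp ℝ ⊤ P) + Lp.const ⊤ P (-‖Z‖)) ≤ ρ a Z := by
        apply hmono; rwa [zero_add]
      rw [hcash] at h2; linarith
    · have h1 : Z ≤ Lp.const ⊤ P ‖Z‖ := le_const_norm' P Z
      have h2 : ρ a Z ≤ ρ a ((0 : Lp ℝ ⊤ P) + Lp.const ⊤ P ‖Z‖) := by
        apply hmono; rwa [zero_add]
      rwa [hcash] at h2
  have hμt : 0 < (μ Set.univ).toReal := ENNReal.toReal_pos hμ (measure_ne_top μ _)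
  set c : ℝ := ((μ Set.univ).toReal)⁻¹ with hc
  have hcpos : 0 < c := inv_pos.mpr hμt
  set Z : Lp ℝ ⊤ P := c • X with hZ
  -- the constant allocation
  set f : A → Lp ℝ ⊤ P := fun _ => Z with hf
  have hfmeas : AllocMeasurable P f := fun Y => by simp only [hf]; exact measurable_const
  have hZcoe : ∀ᵐ ω ∂P, Z ω = c * X ω := by
    filter_upwards [Lp.coeFn_smul c X] with ω hω
    simpa using hω
  have hpair : ∀ Y : Lp ℝ 1 P, ∫ ω, Z ω * Y ω ∂P = c * ∫ ω, X ω * Y ω ∂P := by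
    intro Y
    rw [← integral_const_mul]
    apply integral_congr_ae
    filter_upwards [hZcoe] with ω hω
    rw [hω]; ring
  have halloc : IsAllocOf P μ f X := by
    refine ⟨hfmeas, fun Y => ?_⟩
    simp only [hf]
    refine ⟨integrable_const _, ?_⟩
    rw [integral_const, hpair Y, smul_eq_mul, measureReal_def, ← mul_assoc, mul_inv_cancel₀ hμt.ne', one_mul]
  have hρmeas : Measurable fun a => ρ a (f a) := hfam f hfmeas
  have hρint : Integrable (fun a => ρ a (f a)) μ := by
    apply Integrable.mono' (hρ0.abs.add (integrable_const ‖Z‖))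
      hρmeas.aestronglyMeasurable
    filter_upwards with a
    have h := hbound a Z
    rw [Real.norm_eq_abs, abs_le]
    simp only [Pi.add_apply]
    constructor
    · have := neg_abs_le (ρ a (0 : Lp ℝ ⊤ P)); simp only [hf]; linarith [h.1]
    · have := le_abs_self (ρ a (0 : Lp ℝ ⊤ P)); simp only [hf]; linarith [h.2]
  have hmem : (∫ a, ρ a (f a) ∂μ) ∈ valSet P μ ρ X := ⟨f, halloc, hρint, rfl⟩
  -- the L¹ density of Q
  have hgi : Integrable (fun ω => (Q.rnDeriv P ω).toReal) P :=
    Measure.integrable_toReal_rnDeriv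
  set Y : Lp ℝ 1 P := hgi.toL1 _ with hY
  have hQpair : ∀ W : Lp ℝ ⊤ P, ∫ ω, W ω * Y ω ∂P = ∫ ω, W ω ∂Q := by
    intro W
    rw [← MeasureTheory.integral_rnDeriv_smul hQ (f := fun ω => W ω)]
    apply integral_congr_ae
    filter_upwards [hgi.coeFn_toL1] with ω hω
    rw [hω, smul_eq_mul, mul_comm]
  -- lower bound for every element of valSet
  have hlow : ∀ r ∈ valSet P μ ρ X, ∫ ω, X ω ∂Q - ∫ a, ξ a ∂μ ≤ r := by
    rintro r ⟨g, ⟨hgmeas, hgpair⟩, hgint, rfl⟩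
    obtain ⟨hYint, hYeq⟩ := hgpair Y
    have hae : ∀ᵐ a ∂μ, (∫ ω, g a ω * Y ω ∂P) - ξ a ≤ ρ a (g a) := by
      filter_upwards [hconj] with a ha
      have := ha (g a)
      rw [hQpair (g a)]
      linarith
    have h1 : Integrable (fun a => (∫ ω, g a ω * Y ω ∂P) - ξ a) μ := hYint.sub hξ
    have h2 := integral_mono_ae h1 hgint hae
    rw [integral_sub hYint hξ, hYeq, hQpair X] at h2
    linarith
  have hbdd : BddBelow (valSet P μ ρ X) := ⟨_, hlow⟩
  have hne : (valSet P μ ρ X).Nonempty := ⟨_, hmem⟩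
  refine ⟨hne, hbdd, le_csInf hne hlow, ?_⟩
  have h1 : sInf (valSet P μ ρ X) ≤ ∫ a, ρ a (f a) ∂μ := csInf_le hbdd hmem
  have h2 : ∫ a, ρ a (f a) ∂μ ≤ ∫ a, (|ρ a (0 : Lp ℝ ⊤ P)| + ‖Z‖) ∂μ := by
    apply integral_mono hρint (hρ0.abs.add (integrable_const _))
    intro a
    have := (hbound a Z).2
    have := le_abs_self (ρ a (0 : Lp ℝ ⊤ P))
    simp only [hf, Pi.add_apply]; linarith
  have hZnorm : ‖Z‖ = c * ‖X‖ := by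
    rw [hZ, norm_smul, Real.norm_eq_abs, abs_of_pos hcpos]
  have h3 : ∫ a, (|ρ a (0 : Lp ℝ ⊤ P)| + ‖Z‖) ∂μ
      = (∫ a, |ρ a (0 : Lp ℝ ⊤ P)| ∂μ) + ‖X‖ := by
    rw [integral_add hρ0.abs (integrable_const _), integral_const, smul_eq_mul, measureReal_def, hZnorm,
      ← mul_assoc, mul_inv_cancel₀ hμt.ne', one_mul]
  linarith
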